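/- Let X ∈ R^{n×r} satisfy (S − XX^T)X = XD where S is real symmetric n×n and D is diagonal r×r. Then there exists Y ∈ R^{n×r} with Y^T Y diagonal that also satisfies (S − YY^T)Y = YD, with YY^T = XX^T and ⟨D, Y^T Y⟩ = ⟨D, X^T X⟩. -/

import Mathlib

open Matrix

private lemma exists_perm_aux {m : ℕ} (f g : Fin m → ℝ)
    (h : Multiset.map f Finset.univ.val = Multiset.map g Finset.univ.val) :
    ∃ σ : Equiv.Perm (Fin m), ∀ j, g (σ j) = f j := by
  classical
  have h1 : ∀ (u : Fin m → ℝ) (c : ℝ), Fintype.card {i // u i = c}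
      = Multiset.count c (Multiset.map u Finset.univ.val) := by
    intro u c
    rw [Multiset.count_map, Fintype.card_subtype]
    simp [Finset.filter, eq_comm, Finset.card]
  have key : ∀ c : ℝ, Fintype.card {i // f i = c} = Fintype.card {i // g i = c} := by
    intro c; rw [h1, h1, h]
  exact ⟨Equiv.ofFiberEquiv (fun c => Fintype.equivOfCardEq (key c)),
    fun j => Equiv.ofFiberEquiv_map _ j⟩

private lemma toEuclideanLin_apply' {r : ℕ} (M : Matrix (Fin r) (Fin r) ℝ)
    (x : EuclideanSpace ℝ (Fin r)) (i : Fin r) :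
    Matrix.toEuclideanLin M x i = M.mulVec x i := by
  simp [Matrix.toEuclideanLin]

set_option maxHeartbeats 1000000 in
theorem stmt_3 (n r : ℕ) (S : Matrix (Fin n) (Fin n) ℝ) (hS : Sᵀ = S)
    (D : Matrix (Fin r) (Fin r) ℝ) (hD : ∀ i j, i ≠ j → D i j = 0)
    (X : Matrix (Fin n) (Fin r) ℝ) (hX : (S - X * Xᵀ) * X = X * D) :
    ∃ Y : Matrix (Fin n) (Fin r) ℝ,
      (∀ i j, i ≠ j → (Yᵀ * Y) i j = 0) ∧
      (S - Y * Yᵀ) * Y = Y * D ∧ Y * Yᵀ = X * Xᵀ ∧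
      Matrix.trace (D * (Yᵀ * Y)) = Matrix.trace (D * (Xᵀ * X)) := by
  classical
  set A := Xᵀ * X with hAdef
  set d : Fin r → ℝ := fun j => D j j with hddef
  have hDdiag : D = Matrix.diagonal d := by
    ext i j
    by_cases hij : i = j
    · subst hij; simp [Matrix.diagonal, hddef]
    · simp [Matrix.diagonal, hij, hD i j hij]
  have hDsymm : Dᵀ = D := by
    rw [hDdiag]; exact Matrix.diagonal_transpose d
  have hAsymm : Aᵀ = A := by
    simp [hAdef, Matrix.transpose_mul]
  -- A commutes with D
  have hMain : Xᵀ * S * X - A * A = A * D := by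
    have h := congrArg (fun M => Xᵀ * M) hX
    simp only [Matrix.mul_sub, Matrix.sub_mul] at h
    simpa [hAdef, Matrix.mul_assoc] using h
  have hComm : A * D = D * A := by
    have h := congrArg Matrix.transpose hMain
    simp only [Matrix.transpose_sub, Matrix.transpose_mul, Matrix.transpose_transpose,
      hS, hDsymm, hAsymm] at h
    rw [← Matrix.mul_assoc Xᵀ S X] at h
    rw [hMain] at h
    exact h
  -- Hermitian structure
  have hAh : A.IsHermitian := by
    show Aᴴ = A
    simpa using hAsymm
  have hDh : D.IsHermitian := by
    show Dᴴ = D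
    simpa using hDsymm
  -- linear maps
  set TA := Matrix.toEuclideanLin A with hTA
  set TD := Matrix.toEuclideanLin D with hTD
  have hSA : TA.IsSymmetric := Matrix.isHermitian_iff_isSymmetric.1 hAh
  have hSD : TD.IsSymmetric := Matrix.isHermitian_iff_isSymmetric.1 hDh
  have hmul : ∀ M N : Matrix (Fin r) (Fin r) ℝ,
      Matrix.toEuclideanLin (M * N) = (Matrix.toEuclideanLin M) ∘ₗ (Matrix.toEuclideanLin N) := by
    intro M N
    rw [Matrix.toEuclideanLin_eq_toLin,
      Matrix.toLin_mul (PiLp.basisFun 2 ℝ (Fin r)) (PiLp.basisFun 2 ℝ (Fin r))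
        (PiLp.basisFun 2 ℝ (Fin r))]
  have hCommT : Commute TA TD := by
    show TA * TD = TD * TA
    rw [Module.End.mul_eq_comp, Module.End.mul_eq_comp, hTA, hTD, ← hmul, ← hmul, hComm]
  set Vfam : ℝ × ℝ → Submodule ℝ (EuclideanSpace ℝ (Fin r)) :=
    fun i => Module.End.eigenspace TA i.2 ⊓ Module.End.eigenspace TD i.1 with hVfam
  have hInt : DirectSum.IsInternal Vfam :=
    LinearMap.IsSymmetric.directSum_isInternal_of_commute hSA hSD hCommT
  have hOF : OrthogonalFamily ℝ (fun i => ↥(Vfam i)) (fun i => (Vfam i).subtypeₗᵢ) :=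
    LinearMap.IsSymmetric.orthogonalFamily_eigenspace_inf_eigenspace hSA hSD
  have hfr : Module.finrank ℝ (EuclideanSpace ℝ (Fin r)) = r := by simp
  obtain ⟨hind, hsup⟩ :=
    (DirectSum.isInternal_submodule_iff_iSupIndep_and_iSup_eq_top Vfam).1 hInt
  haveI : Fintype {i // Vfam i ≠ ⊥} := hind.fintypeNeBotOfFiniteDimensional
  have hsup' : ⨆ i : {i // Vfam i ≠ ⊥}, Vfam i.1 = ⊤ := by
    rw [← hsup]
    apply le_antisymm
    · exact iSup_le fun i => le_iSup Vfam i.1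
    · refine iSup_le fun i => ?_
      by_cases h : Vfam i = ⊥
      · simp [h]
      · exact le_iSup (fun j : {i // Vfam i ≠ ⊥} => Vfam j.1) ⟨i, h⟩
  have hInt' : DirectSum.IsInternal (fun i : {i // Vfam i ≠ ⊥} => Vfam i.1) :=
    (DirectSum.isInternal_submodule_iff_iSupIndep_and_iSup_eq_top _).2
      ⟨iSupIndep_ne_bot.2 hind, hsup'⟩
  have hOF' : OrthogonalFamily ℝ (fun i : {i // Vfam i ≠ ⊥} => ↥(Vfam i.1))
      (fun i => (Vfam i.1).subtypeₗᵢ) := hOF.comp Subtype.val_injective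
  set b := hInt'.subordinateOrthonormalBasis hfr hOF' with hb
  set μ : Fin r → ℝ := fun a => (hInt'.subordinateOrthonormalBasisIndex hfr a hOF').1.2 with hμ
  set ν : Fin r → ℝ := fun a => (hInt'.subordinateOrthonormalBasisIndex hfr a hOF').1.1 with hν
  have hsub : ∀ a, b a ∈ Vfam (hInt'.subordinateOrthonormalBasisIndex hfr a hOF').1 :=
    fun a => hInt'.subordinateOrthonormalBasis_subordinate hfr a hOF'
  have heigA : ∀ a, TA (b a) = μ a • b a :=
    fun a => Module.End.mem_eigenspace_iff.1 (Submodule.mem_inf.1 (hsub a)).1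
  have heigD : ∀ a, TD (b a) = ν a • b a :=
    fun a => Module.End.mem_eigenspace_iff.1 (Submodule.mem_inf.1 (hsub a)).2
  -- the matrix of basis vectors
  set V₀ : Matrix (Fin r) (Fin r) ℝ := Matrix.of (fun i j => b j i) with hV₀
  have hV₀col : ∀ (M : Matrix (Fin r) (Fin r) ℝ) (i j : Fin r),
      (M * V₀) i j = Matrix.toEuclideanLin M (b j) i := by
    intro M i j
    rw [toEuclideanLin_apply']
    simp [Matrix.mul_apply, Matrix.mulVec, dotProduct, hV₀]
  have hAV₀ : A * V₀ = V₀ * Matrix.diagonal μ := by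
    ext i j
    rw [hV₀col, ← hTA, heigA j, Matrix.mul_diagonal]
    simp [hV₀, mul_comm]
  have hDV₀ : D * V₀ = V₀ * Matrix.diagonal ν := by
    ext i j
    rw [hV₀col, ← hTD, heigD j, Matrix.mul_diagonal]
    simp [hV₀, mul_comm]
  have hV₀o : V₀ᵀ * V₀ = 1 := by
    ext i j
    have horth := orthonormal_iff_ite.1 b.orthonormal i j
    simp only [PiLp.inner_apply, RCLike.inner_apply, starRingEnd_apply, star_trivial] at horth
    simp only [Matrix.mul_apply, Matrix.transpose_apply, hV₀, Matrix.of_apply, Matrix.one_apply]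
    rw [← horth]
    exact Finset.sum_congr rfl fun _ _ => mul_comm _ _
  have hV₀o' : V₀ * V₀ᵀ = 1 := mul_eq_one_comm.1 hV₀o
  -- eigenvalue multiset equality via determinants
  have hdet : ∀ t : ℝ, ∏ j, (t - d j) = ∏ j, (t - ν j) := by
    intro t
    have h1 : Matrix.diagonal ν = V₀ᵀ * D * V₀ := by
      rw [Matrix.mul_assoc, hDV₀, ← Matrix.mul_assoc, hV₀o, Matrix.one_mul]
    have hdsub : ∀ w : Fin r → ℝ, t • (1 : Matrix (Fin r) (Fin r) ℝ) - Matrix.diagonal w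
        = Matrix.diagonal (fun j => t - w j) := by
      intro w
      ext i j
      by_cases h : i = j
      · subst h; simp
      · simp [Matrix.one_apply_ne h, Matrix.diagonal_apply_ne _ h]
    have h2 : V₀ᵀ * (t • 1 - D) * V₀ = t • 1 - Matrix.diagonal ν := by
      rw [Matrix.mul_sub, Matrix.sub_mul, h1]
      rw [Matrix.mul_smul, Matrix.smul_mul, Matrix.mul_one, hV₀o]
    have h3 : Matrix.det (t • (1 : Matrix (Fin r) (Fin r) ℝ) - Matrix.diagonal ν)
        = Matrix.det (t • 1 - D) := by
      rw [← h2, Matrix.det_mul, Matrix.det_mul]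
      have hdet1 : Matrix.det V₀ᵀ * Matrix.det V₀ = 1 := by
        rw [← Matrix.det_mul, hV₀o, Matrix.det_one]
      calc Matrix.det V₀ᵀ * Matrix.det (t • 1 - D) * Matrix.det V₀
          = Matrix.det V₀ᵀ * Matrix.det V₀ * Matrix.det (t • 1 - D) := by ring
        _ = Matrix.det (t • 1 - D) := by rw [hdet1, one_mul]
    rw [hdsub ν] at h3
    conv_rhs at h3 => rw [hDdiag, hdsub d]
    rw [Matrix.det_diagonal, Matrix.det_diagonal] at h3
    exact h3.symm
  have hmultiset : Multiset.map d Finset.univ.val = Multiset.map ν Finset.univ.val := by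
    have hpq : (∏ j, (Polynomial.X - Polynomial.C (d j)))
        = ∏ j, (Polynomial.X - Polynomial.C (ν j)) := by
      apply Polynomial.funext
      intro t
      simpa [Polynomial.eval_prod] using hdet t
    have hroots := congrArg Polynomial.roots hpq
    have hl : ∀ u : Fin r → ℝ, (∏ j, (Polynomial.X - Polynomial.C (u j))).roots
        = Multiset.map u Finset.univ.val := by
      intro u
      rw [Finset.prod_eq_multiset_prod]
      have hmm : Multiset.map (fun j => Polynomial.X - Polynomial.C (u j)) Finset.univ.val
          = Multiset.map (fun a => Polynomial.X - Polynomial.C a)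
            (Multiset.map u Finset.univ.val) := by
        rw [Multiset.map_map]
        rfl
      rw [hmm, Polynomial.roots_multiset_prod_X_sub_C]
    rw [hl, hl] at hroots
    exact hroots
  obtain ⟨σ, hσ⟩ := exists_perm_aux d ν hmultiset
  -- final matrices
  set V : Matrix (Fin r) (Fin r) ℝ := Matrix.of (fun i j => V₀ i (σ j)) with hV
  have hVo : Vᵀ * V = 1 := by
    ext i j
    have h := congrFun (congrFun (congrArg (fun M i j => M i j) hV₀o) (σ i)) (σ j)
    simp only [Matrix.mul_apply, Matrix.transpose_apply, Matrix.one_apply] at h ⊢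
    simp only [hV, Matrix.of_apply]
    rw [h]
    simp [σ.injective.eq_iff]
  have hVo' : V * Vᵀ = 1 := mul_eq_one_comm.1 hVo
  have hcol : ∀ (M : Matrix (Fin r) (Fin r) ℝ) (i j : Fin r),
      (M * V) i j = (M * V₀) i (σ j) := by
    intro M i j
    simp [Matrix.mul_apply, hV]
  have hDV : D * V = V * D := by
    ext i j
    rw [hcol, hDV₀, Matrix.mul_diagonal]
    conv_rhs => rw [hDdiag]
    rw [Matrix.mul_diagonal]
    simp [hV, hσ j]
  have hAV : A * V = V * Matrix.diagonal (fun j => μ (σ j)) := by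
    ext i j
    rw [hcol, hAV₀, Matrix.mul_diagonal, Matrix.mul_diagonal]
    simp [hV]
  have hYtY : (X * V)ᵀ * (X * V) = Vᵀ * A * V := by
    rw [Matrix.transpose_mul, Matrix.mul_assoc, ← Matrix.mul_assoc Xᵀ X V, ← hAdef,
      ← Matrix.mul_assoc]
  have hYtYd : (X * V)ᵀ * (X * V) = Matrix.diagonal (fun j => μ (σ j)) := by
    rw [hYtY, Matrix.mul_assoc, hAV, ← Matrix.mul_assoc, hVo, Matrix.one_mul]
  have hYYt : X * V * (X * V)ᵀ = X * Xᵀ := by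
    rw [Matrix.transpose_mul, ← Matrix.mul_assoc, Matrix.mul_assoc X V Vᵀ, hVo',
      Matrix.mul_one]
  refine ⟨X * V, ?_, ?_, hYYt, ?_⟩
  · intro i j hij
    rw [hYtYd]
    exact Matrix.diagonal_apply_ne _ hij
  · rw [hYYt, ← Matrix.mul_assoc, hX, Matrix.mul_assoc, hDV, ← Matrix.mul_assoc]
  · rw [hYtY]
    calc Matrix.trace (D * (Vᵀ * A * V))
        = Matrix.trace (D * Vᵀ * A * V) := by
          rw [Matrix.mul_assoc (D * Vᵀ) A V, Matrix.mul_assoc D Vᵀ (A * V),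
            ← Matrix.mul_assoc Vᵀ A V]
      _ = Matrix.trace (V * (D * Vᵀ * A)) := Matrix.trace_mul_comm (D * Vᵀ * A) V
      _ = Matrix.trace (V * D * Vᵀ * A) := by
          rw [← Matrix.mul_assoc V (D * Vᵀ) A, ← Matrix.mul_assoc V D Vᵀ]
      _ = Matrix.trace (D * V * Vᵀ * A) := by rw [← hDV]
      _ = Matrix.trace (D * A) := by
          rw [Matrix.mul_assoc (D * V) Vᵀ A, Matrix.mul_assoc D V (Vᵀ * A),
            ← Matrix.mul_assoc V Vᵀ A]
          rw [← Matrix.mul_assoc D (V * Vᵀ) A, hVo', Matrix.mul_one]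
      _ = Matrix.trace (D * (Xᵀ * X)) := by rw [hAdef]
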